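/- Let h_a, h_b, h_c : (0,∞) → ℝ satisfy h_a(x) + h_b(y) = h_c(x+y) + δ for l₂-almost all (x,y) ∈ (0,∞)², where δ ∈ ℝ. Suppose in addition h_a is semi-constant: h_a(2y) = h_a(y) for all y outside a Lebesgue nullset. Then there exist constants α, β ∈ ℝ such that h_a = α, h_b = β, and h_c = α + β − δ Lebesgue-almost everywhere on (0,∞). -/

import Mathlib

open MeasureTheory Set Filter

private lemma exists_of_ae_on' {P : ℝ → Prop} {s : Set ℝ} (hs : volume s ≠ 0)
    (h : ∀ᵐ x : ℝ ∂volume, x ∈ s → P x) : ∃ x ∈ s, P x := by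
  by_contra hcon
  push_neg at hcon
  have h0 : volume {x : ℝ | ¬ (x ∈ s → P x)} = 0 := ae_iff.mp h
  have hsub : s ⊆ {x : ℝ | ¬ (x ∈ s → P x)} := by
    intro x hx
    simp only [mem_setOf_eq, Classical.not_imp]
    exact ⟨hx, hcon x hx⟩
  exact hs (le_antisymm (h0 ▸ measure_mono hsub) zero_le)

private lemma qmp_two' : Measure.QuasiMeasurePreserving (fun y : ℝ => 2 * y) volume volume := by
  refine ⟨measurable_const_mul 2, ?_⟩
  rw [Real.map_volume_mul_left (two_ne_zero)]
  exact Measure.smul_absolutelyContinuous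

theorem stmt_10 (ha hb hc : ℝ → ℝ) (δ : ℝ)
    (M : Set (ℝ × ℝ)) (hM0 : volume M = 0)
    (heq : ∀ x y : ℝ, 0 < x → 0 < y → (x, y) ∉ M →
      ha x + hb y = hc (x + y) + δ)
    (E : Set ℝ) (hE0 : volume E = 0)
    (hsc : ∀ y : ℝ, 0 < y → y ∉ E → ha (2 * y) = ha y) :
    ∃ α β : ℝ, ∀ᵐ x : ℝ ∂volume, x ∈ Ioi (0 : ℝ) →
      ha x = α ∧ hb x = β ∧ hc x = α + β - δ := by
  classical
  obtain ⟨M', hMM', hM'meas, hM'0⟩ := exists_measurable_superset_of_null hM0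
  have heq' : ∀ x y : ℝ, 0 < x → 0 < y → (x, y) ∉ M' → ha x + hb y = hc (x + y) + δ :=
    fun x y hx hy h => heq x y hx hy fun hm => h (hMM' hm)
  have hprod0 : (volume : Measure ℝ).prod volume M' = 0 := by
    rw [← Measure.volume_eq_prod]; exact hM'0
  -- y-slices are a.e. null
  have hGae0 : ∀ᵐ x : ℝ ∂volume, volume (Prod.mk x ⁻¹' M') = 0 := by
    have h := (Measure.measure_prod_null (μ := (volume : Measure ℝ))
      (ν := (volume : Measure ℝ)) hM'meas).mp hprod0
    filter_upwards [h] with x hx using hx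
  set G : Set ℝ := {x : ℝ | 0 < x ∧ volume (Prod.mk x ⁻¹' M') = 0} with hGdef
  have hGae : ∀ᵐ x : ℝ ∂volume, x ∈ Ioi (0:ℝ) → x ∈ G := by
    filter_upwards [hGae0] with x hx hx0 using ⟨hx0, hx⟩
  have hGpos : ∀ x : ℝ, x ∈ G → 0 < x := fun x hx => hx.1
  have hSlice : ∀ x : ℝ, x ∈ G → ∀ᵐ y : ℝ ∂volume, (x, y) ∉ M' := by
    intro x hx
    exact measure_eq_zero_iff_ae_notMem.mp hx.2
  -- semi-constancy ⇒ a.e. translation invariance of hc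
  have hQ : ∀ t : ℝ, 0 < t → t ∈ G → 2 * t ∈ G → t ∉ E →
      ∀ᵐ z : ℝ ∂volume, 0 < z → hc (2 * t + z) = hc (t + z) := by
    intro t ht htG ht2G htE
    filter_upwards [hSlice t htG, hSlice (2*t) ht2G] with z h1 h2 hz
    have e1 := heq' t z ht hz h1
    have e2 := heq' (2*t) z (by linarith) hz h2
    have e3 := hsc t ht htE
    linarith
  -- key step: ha is constant along nice increments
  have hstep : ∀ a b : ℝ, a ∈ G → b ∈ G → 0 < b - a → b - a ∈ G → 2*(b-a) ∈ G →
      b - a ∉ E → ha b = ha a := by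
    intro a b haG hbG ht htG ht2G htE
    set t := b - a with htdef
    have hQt := hQ t ht htG ht2G htE
    have hQt' : ∀ᵐ y : ℝ ∂volume, 0 < (a - t) + y →
        hc (2*t + ((a-t)+y)) = hc (t + ((a-t)+y)) :=
      (measurePreserving_add_left volume (a - t)).quasiMeasurePreserving.ae hQt
    have hvol : volume (Ioi (max 0 (t - a))) ≠ 0 := by
      rw [Real.volume_Ioi]; exact ENNReal.top_ne_zero
    obtain ⟨y, hymem, s1, s2, s3⟩ := exists_of_ae_on'
      (P := fun y => ((a, y) ∉ M') ∧ ((b, y) ∉ M') ∧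
        (0 < (a - t) + y → hc (2*t + ((a-t)+y)) = hc (t + ((a-t)+y)))) hvol
      (by filter_upwards [hSlice a haG, hSlice b hbG, hQt'] with y u1 u2 u3 _
          exact ⟨u1, u2, u3⟩)
    have hy0 : 0 < y := lt_of_le_of_lt (le_max_left _ _) hymem
    have hyta : t - a < y := lt_of_le_of_lt (le_max_right _ _) hymem
    have e1 := heq' a y haG.1 hy0 s1
    have e2 := heq' b y hbG.1 hy0 s2
    have e3 := s3 (by linarith)
    rw [show 2*t + ((a-t)+y) = b + y by rw [htdef]; ring,
        show t + ((a-t)+y) = a + y by ring] at e3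
    linarith
  -- ha is a.e. constant
  obtain ⟨x₀, hx₀mem, hx₀G⟩ := exists_of_ae_on'
    (by rw [Real.volume_Ioi]; exact ENNReal.top_ne_zero) hGae
  set α := ha x₀ with hαdef
  have hNice : ∀ᵐ t : ℝ ∂volume, 0 < t → (t ∈ G ∧ 2*t ∈ G ∧ t ∉ E) := by
    have h2 : ∀ᵐ t : ℝ ∂volume, 2*t ∈ Ioi (0:ℝ) → 2*t ∈ G := qmp_two'.ae hGae
    have hE : ∀ᵐ t : ℝ ∂volume, t ∉ E := measure_eq_zero_iff_ae_notMem.mp hE0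
    filter_upwards [hGae, h2, hE] with t u1 u2 u3 ht
    exact ⟨u1 (mem_Ioi.mpr ht), u2 (mem_Ioi.mpr (by linarith)), u3⟩
  have hhaα : ∀ᵐ x : ℝ ∂volume, x ∈ Ioi (0:ℝ) → ha x = α := by
    have hup : ∀ᵐ x : ℝ ∂volume, 0 < (-x₀) + x →
        ((-x₀)+x ∈ G ∧ 2*((-x₀)+x) ∈ G ∧ (-x₀)+x ∉ E) :=
      (measurePreserving_add_left volume (-x₀)).quasiMeasurePreserving.ae hNice
    have hdn : ∀ᵐ x : ℝ ∂volume, 0 < x₀ - x →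
        (x₀ - x ∈ G ∧ 2*(x₀-x) ∈ G ∧ x₀-x ∉ E) :=
      (Measure.measurePreserving_sub_left volume x₀).quasiMeasurePreserving.ae hNice
    filter_upwards [hGae, hup, hdn] with x hxG h1 h2 hx0
    have hxG' : x ∈ G := hxG hx0
    rcases lt_trichotomy x x₀ with h | h | h
    · obtain ⟨n1, n2, n3⟩ := h2 (by linarith)
      exact (hstep x x₀ hxG' hx₀G (by linarith) n1 n2 n3).symm
    · rw [h]
    · obtain ⟨n1, n2, n3⟩ := h1 (by linarith)
      have e : x - x₀ = -x₀ + x := by ring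
      exact hstep x₀ x hx₀G hxG' (by linarith) (by rw [e]; exact n1)
        (by rw [e]; exact n2) (by rw [e]; exact n3)
  -- x-slices are a.e. null (swap)
  have hswap0 : (volume : Measure ℝ).prod volume (Prod.swap ⁻¹' M') = 0 := by
    have h : Measure.map Prod.swap ((volume : Measure ℝ).prod volume) M' = 0 := by
      rw [Measure.prod_swap]; exact hprod0
    rwa [Measure.map_apply measurable_swap hM'meas] at h
  have hY0 : ∀ᵐ y : ℝ ∂volume, volume {x : ℝ | (x, y) ∈ M'} = 0 := by
    have h := (Measure.measure_prod_null (μ := (volume : Measure ℝ))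
      (ν := (volume : Measure ℝ)) (hM'meas.preimage measurable_swap)).mp hswap0
    filter_upwards [h] with y hy
    exact hy
  -- constancy of hc on tails
  have hcy : ∀ y : ℝ, 0 < y → volume {x : ℝ | (x, y) ∈ M'} = 0 →
      ∀ᵐ w : ℝ ∂volume, y < w → hc w = α + hb y - δ := by
    intro y hy hy0
    have hs : ∀ᵐ x : ℝ ∂volume, (x, y) ∉ M' := measure_eq_zero_iff_ae_notMem.mp hy0
    have hx : ∀ᵐ x : ℝ ∂volume, 0 < x → hc (x + y) = α + hb y - δ := by
      filter_upwards [hs, hhaα] with x u1 u2 hx0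
      have e1 := heq' x y hx0 hy u1
      have e2 := u2 (mem_Ioi.mpr hx0)
      linarith
    have h := (measurePreserving_add_left volume (-y)).quasiMeasurePreserving.ae hx
    filter_upwards [h] with w hw hyw
    have e := hw (by linarith)
    rwa [show -y + w + y = w by ring] at e
  -- choose a base point y₁
  obtain ⟨y₁, hy₁mem, hy₁0⟩ := exists_of_ae_on'
    (s := Ioi (0:ℝ)) (by rw [Real.volume_Ioi]; exact ENNReal.top_ne_zero)
    (by filter_upwards [hY0] with y hy _; exact hy)
  set β := hb y₁ with hβdef
  have hbval : ∀ y : ℝ, 0 < y → volume {x : ℝ | (x, y) ∈ M'} = 0 → hb y = β := by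
    intro y hy hynull
    have h1 := hcy y hy hynull
    have h2 := hcy y₁ hy₁mem hy₁0
    have hvol : volume (Ioi (max y y₁)) ≠ 0 := by
      rw [Real.volume_Ioi]; exact ENNReal.top_ne_zero
    obtain ⟨w, hwmem, u1, u2⟩ := exists_of_ae_on'
      (P := fun w => (y < w → hc w = α + hb y - δ) ∧ (y₁ < w → hc w = α + hb y₁ - δ)) hvol
      (by filter_upwards [h1, h2] with w u1 u2 _; exact ⟨u1, u2⟩)
    have e1 := u1 (lt_of_le_of_lt (le_max_left _ _) hwmem)
    have e2 := u2 (lt_of_le_of_lt (le_max_right _ _) hwmem)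
    linarith
  have hbβ : ∀ᵐ y : ℝ ∂volume, y ∈ Ioi (0:ℝ) → hb y = β := by
    filter_upwards [hY0] with y hy hy0
    exact hbval y hy0 hy
  -- hc = α + β - δ a.e. on (0, ∞)
  have hyn : ∀ n : ℕ, ∃ y ∈ Ioo (0:ℝ) (1/(n+1)), volume {x : ℝ | (x, y) ∈ M'} = 0 := by
    intro n
    refine exists_of_ae_on' ?_ (by filter_upwards [hY0] with y hy _; exact hy)
    rw [Real.volume_Ioo]
    refine (ENNReal.ofReal_pos.mpr ?_).ne'
    rw [sub_zero]
    positivity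
  choose yf hyfmem hyfnull using hyn
  have htail : ∀ n : ℕ, ∀ᵐ w : ℝ ∂volume, yf n < w → hc w = α + β - δ := by
    intro n
    have h := hcy (yf n) (hyfmem n).1 (hyfnull n)
    have hb' := hbval (yf n) (hyfmem n).1 (hyfnull n)
    filter_upwards [h] with w hw hyw
    rw [hw hyw, hb']
  have hcγ : ∀ᵐ w : ℝ ∂volume, w ∈ Ioi (0:ℝ) → hc w = α + β - δ := by
    rw [ae_iff]
    have hsub : {w : ℝ | ¬ (w ∈ Ioi 0 → hc w = α + β - δ)} ⊆
        ⋃ n : ℕ, {w : ℝ | ¬ (yf n < w → hc w = α + β - δ)} := by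
      intro w hw
      simp only [mem_setOf_eq, Classical.not_imp, mem_Ioi] at hw
      obtain ⟨hw0, hwne⟩ := hw
      obtain ⟨n, hn⟩ := exists_nat_one_div_lt hw0
      refine mem_iUnion.mpr ⟨n, ?_⟩
      simp only [mem_setOf_eq, Classical.not_imp]
      exact ⟨lt_trans (hyfmem n).2 (by exact_mod_cast hn), hwne⟩
    have hu : volume (⋃ n : ℕ, {w : ℝ | ¬ (yf n < w → hc w = α + β - δ)}) = 0 :=
      measure_iUnion_null fun n => ae_iff.mp (htail n)
    exact le_antisymm (hu ▸ measure_mono hsub) zero_le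
  refine ⟨α, β, ?_⟩
  filter_upwards [hhaα, hbβ, hcγ] with x u1 u2 u3 hx
  exact ⟨u1 hx, u2 hx, u3 hx⟩
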